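/- Let f(θ) = sin(θ/2)·tan(θ/2) for θ ∈ (0, π). Then f is strictly increasing on (0, π), f(θ) → ∞ as θ → π⁻, and the unique θ ∈ (0, π) with f(θ) = 2 is θ* = 4·arctan(√(√2 − 1)). (θ* ≈ 2.287 is the transition angle at which the locally accessible information J^W(A|C) = S_A − E^W(A:B) becomes positive for two symmetric boundary intervals of angular size θ in pure AdS₃.) -/

import Mathlib

open Real Filter Set

/-- `f(θ) = sin(θ/2)·tan(θ/2)`, the quantity controlling the transition of the
locally accessible information `J^W(A|C)` in pure AdS₃. -/
noncomputable def jwProfile (θ : ℝ) : ℝ := Real.sin (θ / 2) * Real.tan (θ / 2)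

/-- The transition angle `θ* = 4·arctan(√(√2 − 1))`. -/
noncomputable def thetaStar : ℝ := 4 * Real.arctan (Real.sqrt (Real.sqrt 2 - 1))

lemma jw_mono : StrictMonoOn jwProfile (Set.Ioo 0 π) := by
  intro a ha b hb hab
  have hpi := Real.pi_pos
  have ha2 : a / 2 ∈ Set.Ioo 0 (π / 2) := ⟨by linarith [ha.1], by linarith [ha.2]⟩
  have hb2 : b / 2 ∈ Set.Ioo 0 (π / 2) := ⟨by linarith [hb.1], by linarith [hb.2]⟩
  have hsin : Real.sin (a / 2) < Real.sin (b / 2) :=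
    Real.strictMonoOn_sin ⟨by linarith [ha2.1], by linarith [ha2.2]⟩
      ⟨by linarith [hb2.1], by linarith [hb2.2]⟩ (by linarith)
  have htan : Real.tan (a / 2) < Real.tan (b / 2) :=
    Real.strictMonoOn_tan ⟨by linarith [ha2.1], ha2.2⟩
      ⟨by linarith [hb2.1], hb2.2⟩ (by linarith)
  have htpos : 0 < Real.tan (a / 2) :=
    Real.tan_pos_of_pos_of_lt_pi_div_two ha2.1 ha2.2
  have hspos : 0 ≤ Real.sin (b / 2) :=
    le_of_lt (Real.sin_pos_of_pos_of_lt_pi hb2.1 (by linarith [hb2.2]))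
  exact mul_lt_mul hsin htan.le htpos hspos

lemma jw_tendsto : Tendsto jwProfile (nhdsWithin π (Set.Iio π)) atTop := by
  have h2 : Tendsto (fun θ : ℝ => θ / 2) (nhdsWithin π (Set.Iio π))
      (nhdsWithin (π / 2) (Set.Iio (π / 2))) := by
    apply tendsto_nhdsWithin_of_tendsto_nhds_of_eventually_within
    · exact (tendsto_id.div_const 2).mono_left nhdsWithin_le_nhds
    · filter_upwards [self_mem_nhdsWithin] with x hx
      simp only [Set.mem_Iio] at hx ⊢
      linarith
  have htan := Real.tendsto_tan_pi_div_two.comp h2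
  have hsin : Tendsto (fun θ : ℝ => Real.sin (θ / 2)) (nhdsWithin π (Set.Iio π)) (nhds 1) := by
    have : Tendsto (fun θ : ℝ => Real.sin (θ / 2)) (nhds π) (nhds 1) := by
      have := (Real.continuous_sin.comp (continuous_id.div_const 2)).tendsto π
      simpa [Function.comp_def] using this
    exact this.mono_left nhdsWithin_le_nhds
  exact hsin.pos_mul_atTop one_pos htan

lemma jw_star : jwProfile thetaStar = 2 := by
  set t : ℝ := Real.sqrt (Real.sqrt 2 - 1) with ht
  have hs2 : (1:ℝ) ≤ Real.sqrt 2 := by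
    nlinarith [Real.sq_sqrt (by norm_num : (2:ℝ) ≥ 0), Real.sqrt_nonneg 2]
  have ht2 : t ^ 2 = Real.sqrt 2 - 1 := Real.sq_sqrt (by linarith)
  have hsq : Real.sqrt 2 ^ 2 = 2 := Real.sq_sqrt (by norm_num)
  have h1t : (0:ℝ) < 1 + t ^ 2 := by positivity
  have h1t' : 1 - t ^ 2 ≠ 0 := by nlinarith
  have harg : thetaStar / 2 = 2 * Real.arctan t := by rw [thetaStar]; ring
  have hsin : Real.sin (2 * Real.arctan t) = 2 * t / (1 + t ^ 2) := by
    rw [Real.sin_two_mul, Real.sin_arctan, Real.cos_arctan]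
    have hr : Real.sqrt (1 + t ^ 2) * Real.sqrt (1 + t ^ 2) = 1 + t ^ 2 :=
      Real.mul_self_sqrt h1t.le
    have hrne : Real.sqrt (1 + t ^ 2) ≠ 0 := by positivity
    field_simp
    rw [Real.sq_sqrt h1t.le]
  have htan : Real.tan (2 * Real.arctan t) = 2 * t / (1 - t ^ 2) := by
    rw [Real.tan_two_mul, Real.tan_arctan]
  rw [jwProfile, harg, hsin, htan]
  field_simp
  nlinarith [ht2, hsq]

/-- `f(θ) = sin(θ/2)·tan(θ/2)` is strictly increasing on `(0, π)`, tends to `∞` as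
`θ → π⁻`, and the unique `θ ∈ (0, π)` with `f(θ) = 2` is `θ* = 4·arctan(√(√2 − 1))`. -/
theorem jwProfile_transition :
    StrictMonoOn jwProfile (Set.Ioo 0 π) ∧
      Tendsto jwProfile (nhdsWithin π (Set.Iio π)) atTop ∧
      thetaStar ∈ Set.Ioo 0 π ∧
      ∀ θ ∈ Set.Ioo 0 π, (jwProfile θ = 2 ↔ θ = thetaStar) := by
  have hmem : thetaStar ∈ Set.Ioo 0 π := by
    constructor
    · have : 0 < Real.arctan (Real.sqrt (Real.sqrt 2 - 1)) := by
        have hpos : (0:ℝ) < Real.sqrt (Real.sqrt 2 - 1) := by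
          apply Real.sqrt_pos.mpr
          nlinarith [Real.sq_sqrt (by norm_num : (0:ℝ) ≤ 2), Real.sqrt_nonneg 2]
        calc (0:ℝ) = Real.arctan 0 := by simp
          _ < _ := Real.arctan_strictMono hpos
      unfold thetaStar; linarith
    · have h1 : Real.sqrt (Real.sqrt 2 - 1) < 1 := by
        rw [Real.sqrt_lt' one_pos]
        nlinarith [Real.sq_sqrt (by norm_num : (0:ℝ) ≤ 2), Real.sqrt_nonneg 2]
      have : Real.arctan (Real.sqrt (Real.sqrt 2 - 1)) < π / 4 := by
        calc Real.arctan (Real.sqrt (Real.sqrt 2 - 1)) < Real.arctan 1 :=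
              Real.arctan_strictMono h1
          _ = π / 4 := Real.arctan_one
      unfold thetaStar; linarith
  refine ⟨jw_mono, jw_tendsto, hmem, fun θ hθ => ⟨fun h => ?_, fun h => h ▸ jw_star⟩⟩
  exact jw_mono.injOn hθ hmem (h.trans jw_star.symm)
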